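/- arXiv:1602.01919 — 2 statements merged into one kernel-verified Lean document; each statement's English description precedes it below -/
import Mathlib

section
/- In the vector space V with basis the finite reduced paths from v in a locally finite nonsingular tree X, let M be the span of the elements w_μ − Σ_f w_{μf} (sum over edges f with r(f) = s(μ) and μf reduced). Then the kernel of the linear map L : V → C(v∂X) sending w_μ to χ_{Z(μ)} equals M. -/
/-- A graph in the sense of Serre. -/
structure SerreGraph where
  V : Type
  E : Type
  r : E → V
  s : E → V
  bar : E → E
  bar_ne : ∀ e, bar e ≠ e
  bar_bar : ∀ e, bar (bar e) = e
  s_eq : ∀ e, s e = r (bar e)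

namespace SerreGraph

/-- `IsPathFrom x y p` : the edge list `p` is a path with range `x` and source `y`. -/
def IsPathFrom (Γ : SerreGraph) : Γ.V → Γ.V → List Γ.E → Prop
  | x, y, [] => x = y
  | x, y, e :: p => Γ.r e = x ∧ Γ.IsPathFrom (Γ.s e) y p

/-- A path is reduced if it has no immediate backtracking. -/
def Reduced (Γ : SerreGraph) (p : List Γ.E) : Prop :=
  List.Chain' (fun e f => f ≠ Γ.bar e) p

/-- Connectedness. -/
def Connected (Γ : SerreGraph) : Prop :=
  ∀ x y : Γ.V, ∃ p : List Γ.E, Γ.IsPathFrom x y p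

/-- A tree is a connected graph with no nontrivial reduced loops. -/
def IsTree (Γ : SerreGraph) : Prop :=
  Γ.Connected ∧ ∀ (x : Γ.V) (p : List Γ.E), Γ.IsPathFrom x x p → Γ.Reduced p → p = []

/-- An infinite reduced path with range `x`. -/
def IsInfPathFrom (Γ : SerreGraph) (x : Γ.V) (ξ : ℕ → Γ.E) : Prop :=
  Γ.r (ξ 0) = x ∧ (∀ i, Γ.s (ξ i) = Γ.r (ξ (i + 1))) ∧ (∀ i, ξ (i + 1) ≠ Γ.bar (ξ i))

/-- The boundary from `x`: the set of infinite reduced paths with range `x`. -/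
def Boundary (Γ : SerreGraph) (x : Γ.V) : Type :=
  {ξ : ℕ → Γ.E // Γ.IsInfPathFrom x ξ}

/-- An infinite path extends a finite path if its initial segment is that path. -/
def Extends (Γ : SerreGraph) (ξ : ℕ → Γ.E) (μ : List Γ.E) : Prop :=
  ∀ (i : ℕ) (h : i < μ.length), ξ i = μ.get ⟨i, h⟩

/-- The cylinder set of a finite path `μ`: boundary points extending `μ`. -/
def Cyl (Γ : SerreGraph) (x : Γ.V) (μ : List Γ.E) : Set (Γ.Boundary x) :=
  {ξ | Γ.Extends ξ.1 μ}

/-- The collection of cylinder sets of finite reduced paths with range `x`. -/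
def cylBasis (Γ : SerreGraph) (x : Γ.V) : Set (Set (Γ.Boundary x)) :=
  {S | ∃ (μ : List Γ.E) (y : Γ.V), Γ.IsPathFrom x y μ ∧ Γ.Reduced μ ∧ S = Γ.Cyl x μ}

/-- The boundary is topologized with the cylinder sets as a base. -/
instance boundaryTopology (Γ : SerreGraph) (x : Γ.V) : TopologicalSpace (Γ.Boundary x) :=
  TopologicalSpace.generateFrom (Γ.cylBasis x)

end SerreGraph

namespace SerreGraph

variable {Γ : SerreGraph}

/-- destination of a path -/
def dst (Γ : SerreGraph) (x : Γ.V) (p : List Γ.E) : Γ.V :=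
  p.foldl (fun _ e => Γ.s e) x

@[simp] lemma dst_nil (x : Γ.V) : Γ.dst x [] = x := rfl
@[simp] lemma dst_cons (x : Γ.V) (e : Γ.E) (p : List Γ.E) :
    Γ.dst x (e :: p) = Γ.dst (Γ.s e) p := rfl

lemma isPathFrom_dst : ∀ {p : List Γ.E} {x y : Γ.V}, Γ.IsPathFrom x y p → Γ.dst x p = y
  | [], _, _, h => h
  | e :: p, x, y, h => isPathFrom_dst (p := p) h.2

lemma isPathFrom_append {p : List Γ.E} :
    ∀ {x y : Γ.V}, Γ.IsPathFrom x y p → ∀ {z : Γ.V} {q : List Γ.E},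
      (Γ.IsPathFrom x z (p ++ q) ↔ Γ.IsPathFrom y z q) := by
  induction p with
  | nil => intro x y h z q; cases h; rfl
  | cons e p ih =>
    intro x y h z q
    simp only [List.cons_append, IsPathFrom, h.1, true_and]
    exact ih h.2

lemma isPathFrom_chain' : ∀ {p : List Γ.E} {x y : Γ.V}, Γ.IsPathFrom x y p →
    List.Chain' (fun e f => Γ.r f = Γ.s e) p := by
  intro p
  induction p with
  | nil => intros; exact List.isChain_nil
  | cons e p ih =>
    intro x y h
    cases p with
    | nil => exact List.isChain_singleton e
    | cons f q =>
      exact List.isChain_cons_cons.2 ⟨h.2.1, ih h.2⟩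

lemma dst_eq_s_getLast : ∀ {p : List Γ.E} (hp : p ≠ []) (x : Γ.V),
    Γ.dst x p = Γ.s (p.getLast hp) := by
  intro p
  induction p with
  | nil => intro hp; exact absurd rfl hp
  | cons e p ih =>
    intro hp x
    cases p with
    | nil => rfl
    | cons f q =>
      rw [dst_cons, ih (by simp)]
      rfl

lemma head_r {p : List Γ.E} {x y : Γ.V} (h : Γ.IsPathFrom x y p) (hp : p ≠ []) :
    Γ.r (p.get ⟨0, by exact List.length_pos_iff.2 hp⟩) = x := by
  cases p with
  | nil => exact absurd rfl hp
  | cons e q => exact h.1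


variable {Γ : SerreGraph}

lemma exists_r_eq (hconn : Γ.Connected) (e0 : Γ.E) (x : Γ.V) : ∃ e : Γ.E, Γ.r e = x := by
  obtain ⟨p, hp⟩ := hconn x (Γ.r e0)
  cases p with
  | nil => exact ⟨e0, hp.symm⟩
  | cons e q => exact ⟨e, hp.1⟩

lemma exists_two (hconn : Γ.Connected) (hns : ∀ x : Γ.V, ¬ ∃! e : Γ.E, Γ.r e = x)
    (e0 : Γ.E) (x : Γ.V) : ∃ e f : Γ.E, Γ.r e = x ∧ Γ.r f = x ∧ e ≠ f := by
  obtain ⟨e, he⟩ := exists_r_eq hconn e0 x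
  have := hns x
  rw [ExistsUnique] at this
  push_neg at this
  obtain ⟨f, hf, hfe⟩ := this e he
  exact ⟨f, e, hf, he, hfe⟩

lemma exists_next (hconn : Γ.Connected) (hns : ∀ x : Γ.V, ¬ ∃! e : Γ.E, Γ.r e = x)
    (e0 : Γ.E) (e : Γ.E) : ∃ f : Γ.E, Γ.r f = Γ.s e ∧ f ≠ Γ.bar e := by
  obtain ⟨f, g, hf, hg, hfg⟩ := exists_two hconn hns e0 (Γ.s e)
  by_cases h : f = Γ.bar e
  · exact ⟨g, hg, fun hh => hfg (h.trans hh.symm)⟩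
  · exact ⟨f, hf, h⟩

lemma cyl_nonempty (hconn : Γ.Connected) (hns : ∀ x : Γ.V, ¬ ∃! e : Γ.E, Γ.r e = x)
    (e0 : Γ.E) {v y : Γ.V} {μ : List Γ.E} (hμ : Γ.IsPathFrom v y μ) (hred : Γ.Reduced μ) :
    ∃ ξ : Γ.Boundary v, ξ ∈ Γ.Cyl v μ := by
  classical
  choose nxt hnxt1 hnxt2 using exists_next hconn hns e0
  -- base edge
  have hb : ∃ b : Γ.E, Γ.r b = Γ.dst v μ ∧ ∀ hp : μ ≠ [], b ≠ Γ.bar (μ.getLast hp) := by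
    by_cases hp : μ = []
    · obtain ⟨b, hbr⟩ := exists_r_eq hconn e0 (Γ.dst v μ)
      exact ⟨b, hbr, fun h => absurd hp h⟩
    · refine ⟨nxt (μ.getLast hp), ?_, ?_⟩
      · rw [dst_eq_s_getLast hp]; exact hnxt1 _
      · intro _; exact hnxt2 _
  obtain ⟨b, hbr, hbbar⟩ := hb
  -- tail
  let t : ℕ → Γ.E := fun k => Nat.rec b (fun _ e => nxt e) k
  have ht0 : t 0 = b := rfl
  have htsucc : ∀ k, t (k + 1) = nxt (t k) := fun k => rfl
  set n := μ.length with hn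
  let ξ : ℕ → Γ.E := fun i => if h : i < n then μ.get ⟨i, h⟩ else t (i - n)
  have hxlt : ∀ i (h : i < n), ξ i = μ.get ⟨i, h⟩ := fun i h => dif_pos h
  have hxge : ∀ i, n ≤ i → ξ i = t (i - n) := fun i h => dif_neg (Nat.not_lt.2 h)
  have hchain := isPathFrom_chain' hμ
  change List.IsChain _ μ at hchain
  rw [List.isChain_iff_getElem] at hchain
  have hredg := hred
  change List.IsChain _ μ at hredg
  rw [List.isChain_iff_getElem] at hredg
  have hgetLast : ∀ hp : μ ≠ [], μ.getLast hp = μ.get ⟨n - 1, by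
      have := List.length_pos_iff.2 hp; omega⟩ := by
    intro hp
    exact List.getLast_eq_getElem hp
  have hinf : Γ.IsInfPathFrom v ξ := by
    refine ⟨?_, ?_, ?_⟩
    · by_cases h0 : 0 < n
      · rw [hxlt 0 h0]
        exact head_r hμ (List.ne_nil_of_length_pos (by omega))
      · have hz : n = 0 := by omega
        have hμnil : μ = [] := List.length_eq_zero_iff.1 hz
        have h00 : (0:ℕ) - n = 0 := by omega
        rw [hxge 0 (by omega), h00, ht0]
        rw [hμnil] at hbr
        simpa using hbr
    · intro i
      by_cases h1 : i + 1 < n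
      · rw [hxlt i (by omega), hxlt (i+1) h1]
        exact (hchain i (by omega)).symm
      · by_cases h2 : i < n
        -- junction : i = n - 1
        · have hieq : i = n - 1 := by omega
          have hp : μ ≠ [] := List.ne_nil_of_length_pos (by omega)
          rw [hxlt i h2, hxge (i+1) (by omega)]
          have : i + 1 - n = 0 := by omega
          rw [this, ht0, hbr, dst_eq_s_getLast hp, hgetLast hp]
          congr 1
          simp [hieq]
        · rw [hxge i (by omega), hxge (i+1) (by omega)]
          have : i + 1 - n = (i - n) + 1 := by omega
          rw [this, htsucc]
          exact (hnxt1 _).symm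
    · intro i
      by_cases h1 : i + 1 < n
      · rw [hxlt i (by omega), hxlt (i+1) h1]
        exact hredg i (by omega)
      · by_cases h2 : i < n
        · have hieq : i = n - 1 := by omega
          have hp : μ ≠ [] := List.ne_nil_of_length_pos (by omega)
          rw [hxlt i h2, hxge (i+1) (by omega)]
          have : i + 1 - n = 0 := by omega
          rw [this, ht0]
          have := hbbar hp
          rw [hgetLast hp] at this
          convert this using 3
          simp [hieq]
        · rw [hxge i (by omega), hxge (i+1) (by omega)]
          have : i + 1 - n = (i - n) + 1 := by omega
          rw [this, htsucc]
          exact hnxt2 _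
  exact ⟨⟨ξ, hinf⟩, fun i h => hxlt i h⟩


end SerreGraph

/-- The type of finite reduced paths with range `v` in `Γ`. -/
def RedPaths (Γ : SerreGraph) (v : Γ.V) : Type :=
  {p : List Γ.E // ∃ y : Γ.V, Γ.IsPathFrom v y p ∧ Γ.Reduced p}

section Aux

variable {Γ : SerreGraph} {v : Γ.V}

open SerreGraph

/-- The set of one-edge reduced extensions of `μ`. -/
def ext1 (μ : RedPaths Γ v) : Set (RedPaths Γ v) :=
  {ν : RedPaths Γ v | ∃ f : Γ.E, ν.1 = μ.1 ++ [f]}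

lemma ext1_r {μ ν : RedPaths Γ v} (h : ν ∈ ext1 μ) :
    ∃ f : Γ.E, ν.1 = μ.1 ++ [f] ∧ Γ.r f = Γ.dst v μ.1 := by
  obtain ⟨f, hf⟩ := h
  obtain ⟨y, hy, -⟩ := ν.2
  obtain ⟨yμ, hyμ, -⟩ := μ.2
  rw [hf] at hy
  have h1 : Γ.IsPathFrom yμ y [f] := (isPathFrom_append hyμ).1 hy
  exact ⟨f, hf, h1.1.trans (isPathFrom_dst hyμ).symm⟩

lemma ext1_finite (hlf : ∀ x : Γ.V, {e : Γ.E | Γ.r e = x}.Finite) (μ : RedPaths Γ v) :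
    (ext1 μ).Finite := by
  apply Set.Finite.subset (Set.Finite.preimage
    (Set.injOn_of_injective Subtype.val_injective)
    (((hlf (Γ.dst v μ.1)).image (fun f => μ.1 ++ [f]))))
  intro ν hν
  obtain ⟨f, hf, hr⟩ := ext1_r hν
  exact ⟨f, hr, hf.symm⟩

lemma extends_append_iff {ξ : ℕ → Γ.E} {μ : List Γ.E} {f : Γ.E} :
    Γ.Extends ξ (μ ++ [f]) ↔ Γ.Extends ξ μ ∧ ξ μ.length = f := by
  constructor
  · intro h
    constructor
    · intro i hi
      have := h i (by simp; omega)
      rw [List.get_eq_getElem, List.getElem_append_left hi] at this; exact this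
    · have := h μ.length (by simp)
      rw [this]
      simp
  · rintro ⟨h1, h2⟩ i hi
    simp only [List.length_append, List.length_singleton] at hi
    by_cases hlt : i < μ.length
    · rw [List.get_eq_getElem, List.getElem_append_left hlt]
      exact h1 i hlt
    · have hieq : i = μ.length := by omega
      subst hieq
      rw [h2]
      simp

lemma extends_same_length {ξ : ℕ → Γ.E} {μ ν : List Γ.E} (hμ : Γ.Extends ξ μ)
    (hν : Γ.Extends ξ ν) (hlen : μ.length = ν.length) : μ = ν :=
  List.ext_get hlen fun i h1 h2 => (hμ i h1).symm.trans (hν i h2)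

lemma cyl_ext1_subset {μ ν : RedPaths Γ v} (h : ν ∈ ext1 μ) :
    Γ.Cyl v ν.1 ⊆ Γ.Cyl v μ.1 := by
  obtain ⟨f, hf⟩ := h
  intro ξ hξ
  have hξ' : Γ.Extends ξ.1 ν.1 := hξ
  rw [hf] at hξ'
  exact (extends_append_iff.1 hξ').1

lemma boundary_step {ξ : Γ.Boundary v} {μ : RedPaths Γ v} (hξ : ξ ∈ Γ.Cyl v μ.1) :
    ∃ ν : RedPaths Γ v, ν ∈ ext1 μ ∧ ξ ∈ Γ.Cyl v ν.1 := by
  obtain ⟨y, hy, hred⟩ := μ.2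
  set n := μ.1.length with hn
  set f := ξ.1 n with hfdef
  have hξext : Γ.Extends ξ.1 μ.1 := hξ
  have hrf : Γ.r f = y := by
    by_cases h0 : n = 0
    · have hnil : μ.1 = [] := List.length_eq_zero_iff.1 (by omega)
      have hvy : v = y := by rw [hnil] at hy; exact hy
      rw [hfdef, h0, ← hvy]
      exact ξ.2.1
    · have hlast : ξ.1 (n - 1) = μ.1.getLast (List.ne_nil_of_length_pos (by omega)) := by
        rw [List.getLast_eq_getElem]
        exact hξext (n - 1) (by omega)
      have hstep := ξ.2.2.1 (n - 1)
      rw [Nat.sub_add_cancel (by omega)] at hstep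
      rw [hfdef, ← hstep, hlast, ← dst_eq_s_getLast _ v]
      exact isPathFrom_dst hy
  have hpath : Γ.IsPathFrom v (Γ.s f) (μ.1 ++ [f]) :=
    (isPathFrom_append hy).2 ⟨hrf, rfl⟩
  have hred' : Γ.Reduced (μ.1 ++ [f]) := by
    change List.IsChain _ (μ.1 ++ [f])
    rw [List.isChain_append]
    refine ⟨hred, List.isChain_singleton f, ?_⟩
    intro a ha b hb
    simp only [List.head?_cons, Option.mem_def, Option.some.injEq] at hb
    subst hb
    have hne : μ.1 ≠ [] := by
      intro h
      rw [h] at ha; simp at ha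
    rw [List.getLast?_eq_getLast hne, Option.mem_def, Option.some.injEq] at ha
    subst ha
    have hn0 : 0 < n := by
      rw [hn]; exact List.length_pos_iff.2 hne
    have hlast : ξ.1 (n - 1) = μ.1.getLast hne := by
      rw [List.getLast_eq_getElem]
      exact hξext (n - 1) (by omega)
    have := ξ.2.2.2 (n - 1)
    rw [Nat.sub_add_cancel (by omega), hlast] at this
    exact this
  refine ⟨⟨μ.1 ++ [f], Γ.s f, hpath, hred'⟩, ⟨f, rfl⟩, ?_⟩
  exact extends_append_iff.2 ⟨hξext, rfl⟩

lemma ext1_unique {ξ : Γ.Boundary v} {μ ν ν' : RedPaths Γ v} (h : ν ∈ ext1 μ)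
    (h' : ν' ∈ ext1 μ) (hξ : ξ ∈ Γ.Cyl v ν.1) (hξ' : ξ ∈ Γ.Cyl v ν'.1) : ν = ν' := by
  obtain ⟨f, hf⟩ := h
  obtain ⟨f', hf'⟩ := h'
  have h1 : ξ.1 μ.1.length = f := (extends_append_iff.1 (hf ▸ hξ)).2
  have h2 : ξ.1 μ.1.length = f' := (extends_append_iff.1 (hf' ▸ hξ')).2
  exact Subtype.ext (by rw [hf, hf', ← h1, ← h2])

lemma indicator_eq (hlf : ∀ x : Γ.V, {e : Γ.E | Γ.r e = x}.Finite) (μ : RedPaths Γ v)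
    (ξ : Γ.Boundary v) :
    Set.indicator (Γ.Cyl v μ.1) (fun _ => (1 : ℂ)) ξ =
      ∑ ν ∈ (ext1_finite hlf μ).toFinset,
        Set.indicator (Γ.Cyl v ν.1) (fun _ => (1 : ℂ)) ξ := by
  classical
  by_cases hξ : ξ ∈ Γ.Cyl v μ.1
  · rw [Set.indicator_of_mem hξ]
    obtain ⟨ν, hν, hξν⟩ := boundary_step hξ
    rw [Finset.sum_eq_single_of_mem ν ((Set.Finite.mem_toFinset _).2 hν)]
    · rw [Set.indicator_of_mem hξν]
    · intro ν' hν' hne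
      rw [Set.indicator_of_notMem]
      intro hξν'
      exact hne (ext1_unique ((Set.Finite.mem_toFinset _).1 hν') hν hξν' hξν)
  · rw [Set.indicator_of_notMem hξ]
    symm
    apply Finset.sum_eq_zero
    intro ν hν
    exact Set.indicator_of_notMem
      (fun h => hξ (cyl_ext1_subset ((Set.Finite.mem_toFinset _).1 hν) h)) _

end Aux

section Aux2

variable {Γ : SerreGraph} {v : Γ.V}

open SerreGraph

/-- Iterated expansion of a basis vector to longer paths. -/
noncomputable def expF (N : RedPaths Γ v → Finset (RedPaths Γ v)) :
    ℕ → RedPaths Γ v → (RedPaths Γ v →₀ ℂ)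
  | 0, μ => Finsupp.single μ 1
  | (k + 1), μ => ∑ ν ∈ N μ, expF N k ν

lemma expF_sub_mem {N : RedPaths Γ v → Finset (RedPaths Γ v)} {S : Set (RedPaths Γ v →₀ ℂ)}
    (hrel : ∀ μ, Finsupp.single μ 1 - ∑ ν ∈ N μ, Finsupp.single ν 1 ∈ Submodule.span ℂ S) :
    ∀ (k : ℕ) (μ : RedPaths Γ v),
      Finsupp.single μ 1 - expF N k μ ∈ Submodule.span ℂ S := by
  intro k
  induction k with
  | zero => intro μ; simp [expF]
  | succ k ih =>
    intro μ
    have key : Finsupp.single μ 1 - expF N (k + 1) μ =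
        (Finsupp.single μ 1 - ∑ ν ∈ N μ, Finsupp.single ν 1) +
          ∑ ν ∈ N μ, (Finsupp.single ν 1 - expF N k ν) := by
      rw [expF, Finset.sum_sub_distrib]
      abel
    rw [key]
    exact Submodule.add_mem _ (hrel μ) (Submodule.sum_mem _ fun ν _ => ih ν)

lemma expF_support {N : RedPaths Γ v → Finset (RedPaths Γ v)}
    (hN : ∀ μ, ∀ ν ∈ N μ, ν.1.length = μ.1.length + 1) :
    ∀ (k : ℕ) (μ ρ : RedPaths Γ v), ρ ∈ (expF N k μ).support →
      ρ.1.length = μ.1.length + k := by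
  classical
  intro k
  induction k with
  | zero =>
    intro μ ρ hρ
    have := Finsupp.support_single_subset hρ
    simp only [Finset.mem_singleton] at this
    rw [this]
    omega
  | succ k ih =>
    intro μ ρ hρ
    have := Finsupp.support_finset_sum hρ
    rw [Finset.mem_biUnion] at this
    obtain ⟨ν, hν, hρν⟩ := this
    rw [ih ν ρ hρν, hN μ ν hν]
    omega

lemma level_zero (hconn : Γ.Connected) (hns : ∀ x : Γ.V, ¬ ∃! e : Γ.E, Γ.r e = x)
    (e0 : Γ.E) (w : RedPaths Γ v →₀ ℂ) (n : ℕ)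
    (hlen : ∀ μ ∈ w.support, μ.1.length = n)
    (hker : Finsupp.linearCombination ℂ
      (fun μ : RedPaths Γ v => Set.indicator (Γ.Cyl v μ.1) (fun _ => (1 : ℂ))) w = 0) :
    w = 0 := by
  classical
  ext ν
  by_cases hν : ν ∈ w.support
  · obtain ⟨y, hy, hred⟩ := ν.2
    obtain ⟨ξ, hξ⟩ := cyl_nonempty hconn hns e0 hy hred
    have h0 : (Finsupp.linearCombination ℂ
        (fun μ : RedPaths Γ v => Set.indicator (Γ.Cyl v μ.1) (fun _ => (1 : ℂ))) w) ξ = 0 := by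
      rw [hker]; rfl
    rw [Finsupp.linearCombination_apply, Finsupp.sum, Finset.sum_apply] at h0
    have hsum : ∀ μ ∈ w.support, μ ≠ ν →
        (w μ • Set.indicator (Γ.Cyl v μ.1) (fun _ => (1 : ℂ))) ξ = 0 := by
      intro μ hμ hne
      have : ξ ∉ Γ.Cyl v μ.1 := by
        intro hmem
        exact hne (Subtype.ext (extends_same_length hmem hξ
          ((hlen μ hμ).trans (hlen ν hν).symm)))
      simp [Set.indicator_of_notMem this]
    rw [Finset.sum_eq_single_of_mem ν hν hsum] at h0
    simpa [Set.indicator_of_mem hξ] using h0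
  · exact Finsupp.notMem_support_iff.1 hν

end Aux2

open scoped BigOperators

/-- in the free vector space on the finite reduced paths from `v`, the
kernel of the linear map `L` sending the basis vector `w_μ` to the indicator function
`χ_{Z(μ)}` equals the span `M` of the elements `w_μ − Σ_f w_{μf}` (sum over the
one-edge reduced extensions of `μ`). -/
theorem ker_indicator_map_eq_span
    (Γ : SerreGraph) (htree : Γ.IsTree)
    (hlf : ∀ x : Γ.V, {e : Γ.E | Γ.r e = x}.Finite)
    (hns : ∀ x : Γ.V, ¬ ∃! e : Γ.E, Γ.r e = x)
    (v : Γ.V) :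
    LinearMap.ker (Finsupp.linearCombination ℂ
        (fun μ : RedPaths Γ v => Set.indicator (Γ.Cyl v μ.1) (fun _ => (1 : ℂ)))) =
    Submodule.span ℂ
      {z : RedPaths Γ v →₀ ℂ | ∃ μ : RedPaths Γ v,
        z = Finsupp.single μ 1 -
          ∑ᶠ ν ∈ {ν : RedPaths Γ v | ∃ f : Γ.E, ν.1 = μ.1 ++ [f]},
            Finsupp.single ν (1 : ℂ)} := by
  classical
  obtain ⟨hconn, -⟩ := htree
  have hgen : ∀ μ : RedPaths Γ v,
      (Finsupp.single μ 1 -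
        ∑ᶠ ν ∈ {ν : RedPaths Γ v | ∃ f : Γ.E, ν.1 = μ.1 ++ [f]},
          Finsupp.single ν (1 : ℂ)) =
      Finsupp.single μ 1 -
        ∑ ν ∈ (ext1_finite hlf μ).toFinset, Finsupp.single ν 1 := by
    intro μ
    congr 1
    have hcoe : {ν : RedPaths Γ v | ∃ f : Γ.E, ν.1 = μ.1 ++ [f]} =
        ↑(ext1_finite hlf μ).toFinset := ((ext1_finite hlf μ).coe_toFinset).symm
    rw [hcoe, finsum_mem_coe_finset]
  have hfwd : Submodule.span ℂ
      {z : RedPaths Γ v →₀ ℂ | ∃ μ : RedPaths Γ v,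
        z = Finsupp.single μ 1 -
          ∑ᶠ ν ∈ {ν : RedPaths Γ v | ∃ f : Γ.E, ν.1 = μ.1 ++ [f]},
            Finsupp.single ν (1 : ℂ)} ≤
      LinearMap.ker (Finsupp.linearCombination ℂ
        (fun μ : RedPaths Γ v => Set.indicator (Γ.Cyl v μ.1) (fun _ => (1 : ℂ)))) := by
    rw [Submodule.span_le]
    rintro z ⟨μ, rfl⟩
    rw [SetLike.mem_coe, LinearMap.mem_ker, hgen μ, map_sub, map_sum]
    simp only [Finsupp.linearCombination_single, one_smul]
    rw [sub_eq_zero]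
    funext ξ
    rw [Finset.sum_apply]
    exact indicator_eq hlf μ ξ
  refine le_antisymm ?_ hfwd
  intro z hz
  rw [LinearMap.mem_ker] at hz
  by_cases hE : Nonempty Γ.E
  · obtain ⟨e0⟩ := hE
    set N : RedPaths Γ v → Finset (RedPaths Γ v) :=
      fun μ => (ext1_finite hlf μ).toFinset with hNdef
    have hrel : ∀ μ : RedPaths Γ v,
        Finsupp.single μ 1 - ∑ ν ∈ N μ, Finsupp.single ν 1 ∈
          Submodule.span ℂ {z : RedPaths Γ v →₀ ℂ | ∃ μ : RedPaths Γ v,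
            z = Finsupp.single μ 1 -
              ∑ᶠ ν ∈ {ν : RedPaths Γ v | ∃ f : Γ.E, ν.1 = μ.1 ++ [f]},
                Finsupp.single ν (1 : ℂ)} :=
      fun μ => Submodule.subset_span ⟨μ, (hgen μ).symm⟩
    have hN : ∀ μ : RedPaths Γ v, ∀ ν ∈ N μ, ν.1.length = μ.1.length + 1 := by
      intro μ ν hν
      obtain ⟨f, hf⟩ := (Set.Finite.mem_toFinset _).1 hν
      rw [hf]
      simp
    set n := z.support.sup (fun μ => μ.1.length) with hn
    set z' := ∑ μ ∈ z.support, z μ • expF N (n - μ.1.length) μ with hz'def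
    have hdiff : z - z' ∈ Submodule.span ℂ {z : RedPaths Γ v →₀ ℂ | ∃ μ : RedPaths Γ v,
        z = Finsupp.single μ 1 -
          ∑ᶠ ν ∈ {ν : RedPaths Γ v | ∃ f : Γ.E, ν.1 = μ.1 ++ [f]},
            Finsupp.single ν (1 : ℂ)} := by
      have hzdec : z = ∑ μ ∈ z.support, z μ • Finsupp.single μ 1 := by
        conv_lhs => rw [← Finsupp.sum_single z]
        rw [Finsupp.sum]
        apply Finset.sum_congr rfl
        intro μ _
        rw [Finsupp.smul_single, smul_eq_mul, mul_one]
      have key : z - z' = ∑ μ ∈ z.support,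
          z μ • (Finsupp.single μ 1 - expF N (n - μ.1.length) μ) := by
        simp only [smul_sub]
        rw [Finset.sum_sub_distrib, ← hzdec, ← hz'def]
      rw [key]
      exact Submodule.sum_mem _ fun μ _ =>
        Submodule.smul_mem _ _ (expF_sub_mem hrel _ μ)
    have hz'ker : Finsupp.linearCombination ℂ
        (fun μ : RedPaths Γ v => Set.indicator (Γ.Cyl v μ.1) (fun _ => (1 : ℂ))) z' = 0 := by
      have h1 := LinearMap.mem_ker.1 (hfwd hdiff)
      rw [map_sub, hz, zero_sub, neg_eq_zero] at h1
      exact h1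
    have hlen' : ∀ μ ∈ z'.support, μ.1.length = n := by
      intro ρ hρ
      rw [hz'def] at hρ
      have hb := Finsupp.support_finset_sum hρ
      rw [Finset.mem_biUnion] at hb
      obtain ⟨μ, hμ, hρμ⟩ := hb
      have hρμ' := Finsupp.support_smul hρμ
      have hlen := expF_support hN _ μ ρ hρμ'
      have hle : μ.1.length ≤ n := Finset.le_sup (f := fun μ : RedPaths Γ v => μ.1.length) hμ
      omega
    have hz'0 : z' = 0 := level_zero hconn hns e0 z' n hlen' hz'ker
    have hzz : z = z - z' := by rw [hz'0, sub_zero]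
    rw [hzz]
    exact hdiff
  · have hEe : IsEmpty Γ.E := not_nonempty_iff.1 hE
    have hnil : ∀ ν : RedPaths Γ v, ν.1 = [] := by
      intro ν
      cases hv : ν.1 with
      | nil => rfl
      | cons e q => exact (hEe.false e).elim
    have hμ0path : Γ.IsPathFrom v v [] := rfl
    set μ0 : RedPaths Γ v := ⟨[], v, hμ0path, List.isChain_nil⟩ with hμ0
    have hsub : ∀ ν : RedPaths Γ v, ν = μ0 := fun ν => Subtype.ext (hnil ν)
    have hmem : Finsupp.single μ0 (1 : ℂ) ∈
        {z : RedPaths Γ v →₀ ℂ | ∃ μ : RedPaths Γ v,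
          z = Finsupp.single μ 1 -
            ∑ᶠ ν ∈ {ν : RedPaths Γ v | ∃ f : Γ.E, ν.1 = μ.1 ++ [f]},
              Finsupp.single ν (1 : ℂ)} := by
      refine ⟨μ0, ?_⟩
      have hempty : {ν : RedPaths Γ v | ∃ f : Γ.E, ν.1 = μ0.1 ++ [f]} =
          (∅ : Set (RedPaths Γ v)) := by
        ext ν
        simp only [Set.mem_setOf_eq, Set.mem_empty_iff_false, iff_false]
        rintro ⟨f, -⟩
        exact (hEe.false f).elim
      rw [hempty, finsum_mem_empty, sub_zero]
    have hzeq : z = z μ0 • Finsupp.single μ0 1 := by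
      ext ν
      rw [hsub ν]
      simp
    rw [hzeq]
    exact Submodule.smul_mem _ _ (Submodule.subset_span hmem)
end

section
/- Consider the profinite group ℤ₂ of 2-adic integers with the odometer action of ℤ generated by x ↦ x + 1, and the space Y = (ℤ/2ℤ) × ℤ₂ with the action of the group Λ generated by homeomorphisms a, b where a(i, ξ) = (i+1, ξ), b(0, ξ) = (0, ξ+1), and b(1, ξ) = (1, ξ). Then the action of Λ on Y is minimal and effective, but not topologically free: every point of {0} × ℤ₂ is fixed by aba and every point of {1} × ℤ₂ is fixed by b. -/
open scoped Pointwise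

private def aHomeo : (Bool × ℤ_[2]) ≃ₜ (Bool × ℤ_[2]) where
  toFun p := (!p.1, p.2)
  invFun p := (!p.1, p.2)
  left_inv p := by simp
  right_inv p := by simp
  continuous_toFun := by
    exact ((continuous_of_discreteTopology (f := Bool.not)).comp continuous_fst).prodMk
      continuous_snd
  continuous_invFun := by
    exact ((continuous_of_discreteTopology (f := Bool.not)).comp continuous_fst).prodMk
      continuous_snd

private noncomputable def bHomeo : (Bool × ℤ_[2]) ≃ₜ (Bool × ℤ_[2]) where
  toFun p := (p.1, p.2 + cond p.1 0 1)
  invFun p := (p.1, p.2 - cond p.1 0 1)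
  left_inv p := by simp
  right_inv p := by simp
  continuous_toFun := by
    exact continuous_fst.prodMk (continuous_snd.add
      ((continuous_of_discreteTopology (f := fun i => cond i (0:ℤ_[2]) 1)).comp continuous_fst))
  continuous_invFun := by
    exact continuous_fst.prodMk (continuous_snd.sub
      ((continuous_of_discreteTopology (f := fun i => cond i (0:ℤ_[2]) 1)).comp continuous_fst))

/-- on `Y = (ℤ/2ℤ) × ℤ₂` (here `Bool × ℤ_[2]`, with `false ↔ 0`,
`true ↔ 1`), there are homeomorphisms `a (i, ξ) = (i + 1, ξ)`, `b (0, ξ) = (0, ξ + 1)`,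
`b (1, ξ) = (1, ξ)`, and the action of the group `Λ` generated by `a` and `b` is
minimal and effective but not topologically free: every point of `{0} × ℤ₂` is fixed
by `a b a` and every point of `{1} × ℤ₂` is fixed by `b`. -/
theorem odometer_example_minimal_effective_not_topFree :
    ∃ a b : (Bool × ℤ_[2]) ≃ₜ (Bool × ℤ_[2]),
      (∀ (i : Bool) (ξ : ℤ_[2]), a (i, ξ) = (!i, ξ)) ∧
      (∀ ξ : ℤ_[2], b (false, ξ) = (false, ξ + 1)) ∧
      (∀ ξ : ℤ_[2], b (true, ξ) = (true, ξ)) ∧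
      -- minimality: every orbit of the subgroup generated by `a` and `b` is dense
      (∀ y : Bool × ℤ_[2], Dense {z : Bool × ℤ_[2] |
        ∃ g ∈ Subgroup.closure ({a.toEquiv, b.toEquiv} : Set (Equiv.Perm (Bool × ℤ_[2]))),
          g y = z}) ∧
      -- effectiveness: only the identity acts as the identity map
      (∀ g ∈ Subgroup.closure ({a.toEquiv, b.toEquiv} : Set (Equiv.Perm (Bool × ℤ_[2]))),
        (∀ y : Bool × ℤ_[2], g y = y) → g = 1) ∧
      -- the action is not topologically free
      (¬ ∀ g ∈ Subgroup.closure ({a.toEquiv, b.toEquiv} : Set (Equiv.Perm (Bool × ℤ_[2]))),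
        g ≠ 1 → Dense {y : Bool × ℤ_[2] | g y ≠ y}) ∧
      -- every point of `{0} × ℤ₂` is fixed by `a b a`
      (∀ ξ : ℤ_[2], (a.toEquiv * b.toEquiv * a.toEquiv) (false, ξ) = (false, ξ)) ∧
      -- every point of `{1} × ℤ₂` is fixed by `b`
      (∀ ξ : ℤ_[2], b (true, ξ) = (true, ξ)) := by
  refine ⟨aHomeo, bHomeo, fun i ξ => rfl, fun ξ => by simp [bHomeo], fun ξ => by simp [bHomeo],
    ?_, ?_, ?_, ?_, fun ξ => by simp [bHomeo]⟩
  · -- minimality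
    set S : Set (Equiv.Perm (Bool × ℤ_[2])) := {aHomeo.toEquiv, bHomeo.toEquiv} with hS
    have haS : aHomeo.toEquiv ∈ Subgroup.closure S := Subgroup.subset_closure (by simp [hS])
    have hbS : bHomeo.toEquiv ∈ Subgroup.closure S := Subgroup.subset_closure (by simp [hS])
    set d : Equiv.Perm (Bool × ℤ_[2]) :=
      bHomeo.toEquiv * aHomeo.toEquiv * bHomeo.toEquiv * aHomeo.toEquiv with hdd
    have hdS : d ∈ Subgroup.closure S := by
      exact mul_mem (mul_mem (mul_mem hbS haS) hbS) haS
    have hd : ∀ p : Bool × ℤ_[2], d p = (p.1, p.2 + 1) := by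
      rintro ⟨i, ξ⟩
      cases i <;> simp [hdd, Equiv.Perm.mul_apply, aHomeo, bHomeo]
    have hdinv : ∀ p : Bool × ℤ_[2], d⁻¹ p = (p.1, p.2 - 1) := by
      intro p
      have : d (p.1, p.2 - 1) = p := by rw [hd]; simp
      calc d⁻¹ p = d⁻¹ (d (p.1, p.2 - 1)) := by rw [this]
        _ = (p.1, p.2 - 1) := Equiv.symm_apply_apply d _
    have key : ∀ n : ℤ, ∃ g ∈ Subgroup.closure S,
        ∀ p : Bool × ℤ_[2], g p = (p.1, p.2 + n) := by
      intro n
      induction n using Int.induction_on with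
      | zero => exact ⟨1, one_mem _, fun p => by simp⟩
      | succ k ih =>
        obtain ⟨g, hg, hgp⟩ := ih
        refine ⟨d * g, mul_mem hdS hg, fun p => ?_⟩
        rw [Equiv.Perm.mul_apply, hgp, hd]
        push_cast
        rw [add_assoc]
      | pred k ih =>
        obtain ⟨g, hg, hgp⟩ := ih
        refine ⟨d⁻¹ * g, mul_mem (inv_mem hdS) hg, fun p => ?_⟩
        rw [Equiv.Perm.mul_apply, hgp, hdinv]
        push_cast
        ring_nf
    rintro ⟨i, ξ⟩
    have hsub : (Set.univ ×ˢ Set.range (fun n : ℤ => ξ + (n : ℤ_[2]))) ⊆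
        {z : Bool × ℤ_[2] | ∃ g ∈ Subgroup.closure S, g (i, ξ) = z} := by
      rintro ⟨j, η⟩ ⟨-, n, rfl⟩
      obtain ⟨g, hg, hgp⟩ := key n
      by_cases hij : j = i
      · exact ⟨g, hg, by rw [hgp]; simp [hij]⟩
      · refine ⟨aHomeo.toEquiv * g, mul_mem haS hg, ?_⟩
        rw [Equiv.Perm.mul_apply, hgp]
        have : j = !i := by cases i <;> cases j <;> simp_all
        simp [aHomeo, this]
    refine Dense.mono hsub (dense_univ.prod ?_)
    have h1 : DenseRange (fun x : ℤ_[2] => ξ + x) :=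
      (Function.Surjective.denseRange (fun y => ⟨y - ξ, by ring⟩))
    exact h1.comp PadicInt.denseRange_intCast (continuous_const.add continuous_id)
  · -- effectiveness
    intro g _ hg
    exact Equiv.ext hg
  · -- not topologically free
    intro h
    have hbS : bHomeo.toEquiv ∈ Subgroup.closure
        ({aHomeo.toEquiv, bHomeo.toEquiv} : Set (Equiv.Perm (Bool × ℤ_[2]))) :=
      Subgroup.subset_closure (by simp)
    have hb1 : bHomeo.toEquiv ≠ 1 := by
      intro hb
      have : bHomeo.toEquiv (false, (0:ℤ_[2])) = (false, 0) := by rw [hb]; rfl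
      simp [bHomeo] at this
    have hdense := h bHomeo.toEquiv hbS hb1
    have hopen : IsOpen {y : Bool × ℤ_[2] | y.1 = true} :=
      (isOpen_discrete {true}).preimage continuous_fst
    obtain ⟨⟨j, η⟩, hy1, hy2⟩ := hdense.exists_mem_open hopen ⟨(true, 0), rfl⟩
    simp only [Set.mem_setOf_eq] at hy1 hy2
    subst hy2
    simp [bHomeo] at hy1
  · -- aba fixes {0} × ℤ₂
    intro ξ
    simp [Equiv.Perm.mul_apply, aHomeo, bHomeo]
end
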